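/- There exists k₀ ≥ 1 such that for every real k ≥ k₀ and every α ∈ [0, k], one has 9/16 + (27/8)·α + (27/4 − 9/(4k²))·α² + (9/2 − 9/k²)·α³ − (3/(4k²))·α⁴ + (9/(2k²) − 27/(4k⁴))·α⁵ − (9/k⁴)·α⁶ ≥ 9/16. -/

import Mathlib

/-- Leading-order form of inequality (3b) in region 6. -/
theorem stmt_13 :
    ∃ k₀ : ℝ, 1 ≤ k₀ ∧
      ∀ k : ℝ, k₀ ≤ k → ∀ α : ℝ, α ∈ Set.Icc (0:ℝ) k →
        9/16 ≤ 9/16 + (27/8)*α + (27/4 - 9/(4*k^2))*α^2 + (9/2 - 9/k^2)*α^3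
          - (3/(4*k^2))*α^4 + (9/(2*k^2) - 27/(4*k^4))*α^5 - (9/k^4)*α^6 := by
  refine ⟨4, by norm_num, fun k hk α hα => ?_⟩
  obtain ⟨h0, hαk⟩ := hα
  have hk0 : (0:ℝ) < k := by linarith
  have h4 : (0:ℝ) < k^4 := by positivity
  have key : 0 ≤ (27/8)*α*k^4 + (27/4*k^2 - 9/4)*α^2*k^2 + (9/2*k^2 - 9)*α^3*k^2
      - (3/4)*α^4*k^2 + (9/2*k^2 - 27/4)*α^5 - 9*α^6 := by
    have hA : 3/4*α^4*k^2 ≤ 3/4*α^3*k^3 := by nlinarith [mul_nonneg (mul_nonneg (pow_nonneg h0 3) (sq_nonneg k)) (sub_nonneg.2 hαk)]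
    have hB : 9*α^6 ≤ 9*α^3*k^3 := by
      have : α^3 ≤ k^3 := pow_le_pow_left₀ h0 hαk 3
      nlinarith [pow_nonneg h0 3]
    have hC : 0 ≤ (9/2*k^2 - 27/4)*α^5 := by
      have : (0:ℝ) ≤ 9/2*k^2 - 27/4 := by nlinarith
      positivity
    have hD : 39/4*k^3*α^3 ≤ (9/2*k^2-9)*k^2*α^3 := by
      have h1 : (0:ℝ) ≤ 9/2*k^2 - 39/4*k - 9 := by nlinarith
      nlinarith [mul_nonneg (mul_nonneg h1 (sq_nonneg k)) (pow_nonneg h0 3)]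
    have hE : (0:ℝ) ≤ 27/8*α*k^4 := by positivity
    have hF : (0:ℝ) ≤ (27/4*k^2-9/4)*α^2*k^2 := by
      have : (0:ℝ) ≤ 27/4*k^2-9/4 := by nlinarith
      positivity
    nlinarith [mul_nonneg (pow_nonneg h0 3) (pow_pos hk0 3).le]
  have heq : (27/8)*α + (27/4 - 9/(4*k^2))*α^2 + (9/2 - 9/k^2)*α^3
          - (3/(4*k^2))*α^4 + (9/(2*k^2) - 27/(4*k^4))*α^5 - (9/k^4)*α^6
      = ((27/8)*α*k^4 + (27/4*k^2 - 9/4)*α^2*k^2 + (9/2*k^2 - 9)*α^3*k^2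
      - (3/4)*α^4*k^2 + (9/2*k^2 - 27/4)*α^5 - 9*α^6) / k^4 := by
    field_simp
  linarith [div_nonneg key h4.le, heq]
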